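/- For every M > 0 there exist ε₀ ∈ (0,1] and C ≥ 1 such that for all k ∈ 𝕋, all |η| ≤ M and all ε ∈ (0,ε₀]: (i) C⁻¹·(R(k) + (εη)²) ≤ R_ε ≤ C·(R(k) + (εη)²); (ii) C⁻¹·R_ε ≤ ω̄ ≤ C·R_ε; (iii) |Δω·R′(k)| ≤ C·ε·R_ε; and (iv) for every λ > 0, |D̃_j| ≤ C·(R_ε + λε²) for each j ∈ {1, 2, +, −}. -/

import Mathlib

noncomputable section

open Real Matrix Complex

/-- Dispersion relation `ω(k) = 2√α·sin²(πk)`. -/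
def ω (α k : ℝ) : ℝ := 2 * Real.sqrt α * Real.sin (π * k) ^ 2

/-- `R(k) = 2·sin²(πk)·(1 + 2cos²(πk))`. -/
def R (k : ℝ) : ℝ := 2 * Real.sin (π * k) ^ 2 * (1 + 2 * Real.cos (π * k) ^ 2)

/-- `R′(k) = 2π·(sin(2πk) + sin(4πk))`. -/
def R' (k : ℝ) : ℝ := 2 * π * (Real.sin (2 * π * k) + Real.sin (4 * π * k))

/-- `R″(k) = 4π²·(4cos²(2πk) + cos(2πk) − 2)`. -/
def R'' (k : ℝ) : ℝ := 4 * π ^ 2 * (4 * Real.cos (2 * π * k) ^ 2 + Real.cos (2 * π * k) - 2)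

/-- `R_ε = R(k) + ((εη)²/8)·R″(k)`. -/
def Rε (ε η k : ℝ) : ℝ := R k + (ε * η) ^ 2 / 8 * R'' k

/-- `ω̄ = (ω(k + εη/2) + ω(k − εη/2))/2`. -/
def ωbar (α ε η k : ℝ) : ℝ := (ω α (k + ε * η / 2) + ω α (k - ε * η / 2)) / 2

/-- `Δω = ω(k + εη/2) − ω(k − εη/2)`. -/
def Δω (α ε η k : ℝ) : ℝ := ω α (k + ε * η / 2) - ω α (k - ε * η / 2)

/-- `D̃₁ = ε²λ + 2γR_ε + i·Δω`. -/
def D₁ (α γ ε lam η k : ℝ) : ℂ :=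
  (ε ^ 2 * lam + 2 * γ * Rε ε η k : ℝ) + Complex.I * (Δω α ε η k : ℝ)

/-- `D̃₂ = ε²λ + 2γR_ε + 2i·ω̄`. -/
def D₂ (α γ ε lam η k : ℝ) : ℂ :=
  (ε ^ 2 * lam + 2 * γ * Rε ε η k : ℝ) + 2 * Complex.I * (ωbar α ε η k : ℝ)

/-- `D̃₊ = −γR_ε + (γε/2)·R′(k)·η`. -/
def Dplus (γ ε η k : ℝ) : ℝ := -γ * Rε ε η k + γ * ε / 2 * R' k * η

/-- `D̃₋ = −γR_ε − (γε/2)·R′(k)·η`. -/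
def Dminus (γ ε η k : ℝ) : ℝ := -γ * Rε ε η k - γ * ε / 2 * R' k * η

/-- The 4×4 matrix `D̃_ε(λ,η,k)`. -/
def Dmat (α γ ε lam η k : ℝ) : Matrix (Fin 4) (Fin 4) ℂ :=
  !![D₁ α γ ε lam η k, (Dplus γ ε η k : ℂ), (Dminus γ ε η k : ℂ), 0;
     (Dplus γ ε η k : ℂ), D₂ α γ ε lam η k, 0, (Dminus γ ε η k : ℂ);
     (Dminus γ ε η k : ℂ), 0, (starRingEnd ℂ) (D₂ α γ ε lam η k), (Dplus γ ε η k : ℂ);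
     0, (Dminus γ ε η k : ℂ), (Dplus γ ε η k : ℂ), (starRingEnd ℂ) (D₁ α γ ε lam η k)]

/-- `δ̃_ε(λ,η,k) = det D̃_ε(λ,η,k)`. -/
def δdet (α γ ε lam η k : ℝ) : ℂ := (Dmat α γ ε lam η k).det

/- ## auxiliary lemmas -/

private lemma key1lo (x t p : ℝ) (hx1 : -1 ≤ x) (hx2 : x ≤ 1) (ht0 : 0 ≤ t) (ht : t ≤ 1/225)
    (hp9 : 9 ≤ p) (hp10 : p ≤ 10) :
    (1/3)*((1-x)*(2+x)+t) ≤ (1-x)*(2+x) + p*t/2*(4*x^2+x-2) := by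
  rcases le_or_gt (9/10) x with h | h
  · have h1 : (2:ℝ) ≤ 4*x^2+x-2 := by nlinarith
    have h2 : 9*t*2 ≤ p*t*(4*x^2+x-2) := by
      nlinarith [mul_nonneg ht0 (by linarith : (0:ℝ) ≤ 4*x^2+x-2),
        mul_le_mul_of_nonneg_left h1 (mul_nonneg (by linarith : (0:ℝ) ≤ p) ht0)]
    nlinarith [mul_nonneg (by linarith : (0:ℝ) ≤ 1-x) (by linarith : (0:ℝ) ≤ 2+x)]
  · have hR : (1:ℝ)/10 ≤ (1-x)*(2+x) := by nlinarith
    have h2 : -(4*x^2+x-2) ≤ 33/16 := by nlinarith [sq_nonneg (x+1/8)]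
    have h3 : p*t*(-(4*x^2+x-2)) ≤ 10*t*(33/16) := by
      nlinarith [mul_nonneg ht0 (by nlinarith [sq_nonneg (x+1/8)] : (0:ℝ) ≤ 33/16+(4*x^2+x-2)),
        mul_nonneg ht0 (by linarith : (0:ℝ) ≤ 10-p)]
    nlinarith

private lemma key1hi (x t p : ℝ) (hx1 : -1 ≤ x) (hx2 : x ≤ 1) (ht0 : 0 ≤ t)
    (hp9 : 9 ≤ p) (hp10 : p ≤ 10) :
    (1-x)*(2+x) + p*t/2*(4*x^2+x-2) ≤ 35*((1-x)*(2+x)+t) := by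
  have h1 : 4*x^2+x-2 ≤ 3 := by nlinarith
  have h2 : p*t*(4*x^2+x-2) ≤ 10*t*3 := by
    nlinarith [mul_nonneg ht0 (by nlinarith : (0:ℝ) ≤ 3-(4*x^2+x-2)),
      mul_nonneg ht0 (by linarith : (0:ℝ) ≤ 10-p),
      mul_nonneg (mul_nonneg ht0 (by linarith : (0:ℝ) ≤ 10-p))
        (by nlinarith : (0:ℝ) ≤ 3-(4*x^2+x-2))]
  nlinarith [mul_nonneg (by linarith : (0:ℝ) ≤ 1-x) (by linarith : (0:ℝ) ≤ 2+x)]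

private lemma key2lo (x t v : ℝ) (hx2 : x ≤ 1) (ht0 : 0 ≤ t) (ht : t ≤ 1/225)
    (hv1 : 1 - 6*t ≤ v) (hv2 : v ≤ 1 - 2*t) :
    (1/7)*((1-x)*(2+x)+t) ≤ 1 - x*v := by
  have hv0 : (0:ℝ) ≤ v := by nlinarith
  rcases le_or_gt x (1/2) with h | h
  · have hxv : x*v ≤ 1/2 := by nlinarith [mul_nonneg (by linarith : (0:ℝ) ≤ 1/2-x) hv0]
    nlinarith [sq_nonneg (x+1/2)]
  · have h1 : t ≤ x*(1-v) := by
      nlinarith [mul_nonneg (by linarith : (0:ℝ) ≤ x-1/2) (by nlinarith : (0:ℝ) ≤ 1-v)]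
    nlinarith [sq_nonneg (1-x)]

private lemma key2hi (x t v : ℝ) (hx1 : -1 ≤ x) (hx2 : x ≤ 1) (ht0 : 0 ≤ t)
    (hv1 : 1 - 6*t ≤ v) (hv3 : v ≤ 1) :
    1 - x*v ≤ 6*((1-x)*(2+x)+t) := by
  rcases le_or_gt 0 x with h | h
  · have h1 : x*(1-v) ≤ 1-v := by
      nlinarith [mul_nonneg (by linarith : (0:ℝ) ≤ 1-x) (by linarith : (0:ℝ) ≤ 1-v)]
    nlinarith [mul_nonneg (by linarith : (0:ℝ) ≤ 1-x) (by linarith : (0:ℝ) ≤ 1+x)]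
  · have h1 : x ≤ x*v := by
      nlinarith [mul_nonneg (by linarith : (0:ℝ) ≤ -x) (by linarith : (0:ℝ) ≤ 1-v)]
    nlinarith [mul_nonneg (by linarith : (0:ℝ) ≤ 1-x) (by linarith : (0:ℝ) ≤ 1+x),
      mul_nonneg (by linarith : (0:ℝ) ≤ -x) (by linarith : (0:ℝ) ≤ 1+x)]

private lemma keyv (t p c : ℝ) (ht0 : 0 ≤ t) (ht : t ≤ 1/225) (hp9 : 9 ≤ p) (hp10 : p ≤ 10)
    (hc : |c - (1 - p*t/2)| ≤ (p*t)^2*(5/96)) : 1 - 6*t ≤ c ∧ c ≤ 1 - 2*t := by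
  rw [_root_.abs_le] at hc
  have htt : t*t ≤ (1/225)*t := by nlinarith
  have h2 : p^2 ≤ 100 := by nlinarith
  have hpt : (p*t)^2 ≤ 100*(t*t) := by
    nlinarith [mul_le_mul_of_nonneg_right h2 (mul_nonneg ht0 ht0)]
  constructor <;> nlinarith

private lemma Rform (k : ℝ) : R k = (1 - Real.cos (2*π*k)) * (2 + Real.cos (2*π*k)) := by
  unfold R
  rw [show 2*π*k = 2*(π*k) by ring, Real.cos_two_mul]
  linear_combination (2 + 4*Real.cos (π*k)^2) * Real.sin_sq_add_cos_sq (π*k)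

private lemma Rεform (ε η k : ℝ) : Rε ε η k = (1 - Real.cos (2*π*k)) * (2 + Real.cos (2*π*k))
    + π^2*(ε*η)^2/2*(4*Real.cos (2*π*k)^2 + Real.cos (2*π*k) - 2) := by
  rw [Rε, Rform, R'']; ring

private lemma sin_sq_arg (a b : ℝ) :
    Real.sin (π*(a + b/2))^2 = (1 - Real.cos (2*π*a + π*b))/2 := by
  have e1 : Real.cos (2*π*a + π*b) = 1 - 2*Real.sin (π*(a+b/2))^2 := by
    rw [show 2*π*a + π*b = 2*(π*(a+b/2)) by ring, Real.cos_two_mul]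
    linear_combination 2 * Real.sin_sq_add_cos_sq (π*(a+b/2))
  linarith

private lemma ωbarform (α ε η k : ℝ) : ωbar α ε η k
    = Real.sqrt α * (1 - Real.cos (2*π*k) * Real.cos (π*(ε*η))) := by
  unfold ωbar ω
  rw [show k + ε*η/2 = k + (ε*η)/2 by ring, show k - ε*η/2 = k + (-(ε*η))/2 by ring,
      sin_sq_arg, sin_sq_arg,
      show 2*π*k + π*(-(ε*η)) = 2*π*k - π*(ε*η) by ring, Real.cos_add, Real.cos_sub]
  ring

private lemma Δωform (α ε η k : ℝ) : Δω α ε η k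
    = 2 * Real.sqrt α * (Real.sin (2*π*k) * Real.sin (π*(ε*η))) := by
  unfold Δω ω
  rw [show k + ε*η/2 = k + (ε*η)/2 by ring, show k - ε*η/2 = k + (-(ε*η))/2 by ring,
      sin_sq_arg, sin_sq_arg,
      show 2*π*k + π*(-(ε*η)) = 2*π*k - π*(ε*η) by ring, Real.cos_add, Real.cos_sub]
  ring

private lemma R'form (k : ℝ) : R' k = 2*π*(Real.sin (2*π*k) * (1 + 2*Real.cos (2*π*k))) := by
  unfold R'
  rw [show 4*π*k = 2*(2*π*k) by ring, Real.sin_two_mul]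
  ring

set_option maxHeartbeats 2000000 in
private lemma pointwise (α γ sa C M : ℝ) (hα : 0 < α) (hγ : 0 < γ) (hM : 0 < M)
    (hsadef : sa = Real.sqrt α) (hsa : 0 < sa) (hC0 : 0 < C)
    (hC35 : (35:ℝ) ≤ C) (hC245 : (245:ℝ) ≤ C*sa) (hCω : 18*sa ≤ C)
    (hCiii : 72*π^2*sa*M ≤ C) (hC2γ : 2*γ + 36*sa + 1 ≤ C) (hCpm : 45*γ ≤ C)
    (hC1 : (1:ℝ) ≤ C) (k η ε : ℝ) (hη : |η| ≤ M) (hε0 : 0 < ε) (hε1 : ε ≤ 1)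
    (hεM : ε ≤ 1/(15*(M+1))) :
    (C⁻¹ * (R k + (ε * η) ^ 2) ≤ Rε ε η k ∧ Rε ε η k ≤ C * (R k + (ε * η) ^ 2)) ∧
    (C⁻¹ * Rε ε η k ≤ ωbar α ε η k ∧ ωbar α ε η k ≤ C * Rε ε η k) ∧
    |Δω α ε η k * R' k| ≤ C * ε * Rε ε η k ∧
    (∀ lam : ℝ, 0 < lam →
      ‖D₁ α γ ε lam η k‖ ≤ C * (Rε ε η k + lam * ε ^ 2) ∧
      ‖D₂ α γ ε lam η k‖ ≤ C * (Rε ε η k + lam * ε ^ 2) ∧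
      |Dplus γ ε η k| ≤ C * (Rε ε η k + lam * ε ^ 2) ∧
      |Dminus γ ε η k| ≤ C * (Rε ε η k + lam * ε ^ 2)) := by
  have hπ : (3:ℝ) < π := Real.pi_gt_three
  have hπ' : π < 3.15 := by have := Real.pi_lt_d2; linarith
  have h9 : (9:ℝ) ≤ π^2 := by nlinarith
  have h10 : π^2 ≤ (10:ℝ) := by nlinarith
  -- abbreviations
  set x := Real.cos (2*π*k) with hx
  set s2 := Real.sin (2*π*k) with hs2
  set v := Real.cos (π*(ε*η)) with hv
  set w := Real.sin (π*(ε*η)) with hw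
  set t := (ε*η)^2 with ht
  have hx1 : -1 ≤ x := Real.neg_one_le_cos _
  have hx2 : x ≤ 1 := Real.cos_le_one _
  have ht0 : 0 ≤ t := sq_nonneg _
  -- |εη| ≤ 1/15
  have hsmall : |ε*η| ≤ 1/15 := by
    rw [_root_.abs_mul, _root_.abs_of_pos hε0]
    have h1 : ε*|η| ≤ (1/(15*(M+1)))*M :=
      mul_le_mul hεM hη (_root_.abs_nonneg _) (by positivity)
    have h2 : (1/(15*(M+1)))*M ≤ 1/15 := by
      rw [div_mul_eq_mul_div, div_le_div_iff₀ (by positivity) (by norm_num)]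
      linarith
    linarith
  have htb : t ≤ 1/225 := by
    rw [ht, ← _root_.sq_abs]
    have := mul_self_le_mul_self (_root_.abs_nonneg (ε*η)) hsmall
    calc |ε*η|^2 = |ε*η| * |ε*η| := by ring
      _ ≤ (1/15)*(1/15) := this
      _ = 1/225 := by norm_num
  -- cosine bounds
  have hu1 : |π*(ε*η)| ≤ 1 := by
    rw [_root_.abs_mul, _root_.abs_of_pos Real.pi_pos]
    have h := mul_le_mul hπ'.le hsmall (_root_.abs_nonneg _) (by norm_num : (0:ℝ) ≤ 3.15)
    calc π * |ε*η| ≤ 3.15 * (1/15) := h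
      _ ≤ 1 := by norm_num
  have hvb : 1 - 6*t ≤ v ∧ v ≤ 1 - 2*t := by
    apply keyv t (π^2) v ht0 htb h9 h10
    have hcb := Real.cos_bound hu1
    have e1 : (π*(ε*η))^2/2 = π^2*t/2 := by rw [ht]; ring
    have e2 : |π*(ε*η)|^4 = (π^2*t)^2 := by
      rw [show |π*(ε*η)|^4 = (|π*(ε*η)|^2)^2 by ring, _root_.sq_abs, ht]; ring
    rw [← hv] at hcb
    rw [e1] at hcb
    rw [e2] at hcb
    exact hcb
  obtain ⟨hv1, hv2⟩ := hvb
  -- forms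
  have hRk : R k = (1-x)*(2+x) := by rw [hx]; exact Rform k
  have hRε_eq : Rε ε η k = (1-x)*(2+x) + π^2*t/2*(4*x^2+x-2) := by
    rw [hx, ht]; exact Rεform ε η k
  have hωb_eq : ωbar α ε η k = sa * (1 - x*v) := by
    rw [hx, hv, hsadef]; exact ωbarform α ε η k
  have hΔω_eq : Δω α ε η k = 2*sa*(s2*w) := by
    rw [hs2, hw, hsadef]; exact Δωform α ε η k
  have hR'_eq : R' k = 2*π*(s2*(1+2*x)) := by
    rw [hs2, hx]; exact R'form k
  have hs2sq : s2^2 = 1 - x^2 := by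
    rw [hs2, hx]; linarith [Real.sin_sq_add_cos_sq (2*π*k)]
  -- basic bounds
  have hRt0 : 0 ≤ (1-x)*(2+x) + t := by
    linarith [mul_nonneg (by linarith : (0:ℝ) ≤ 1-x) (by linarith : (0:ℝ) ≤ 2+x)]
  have hRεlo : (1/3)*((1-x)*(2+x)+t) ≤ Rε ε η k := by
    rw [hRε_eq]; exact key1lo x t (π^2) hx1 hx2 ht0 htb h9 h10
  have hRεhi : Rε ε η k ≤ 35*((1-x)*(2+x)+t) := by
    rw [hRε_eq]; exact key1hi x t (π^2) hx1 hx2 ht0 h9 h10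
  have hRε0 : 0 ≤ Rε ε η k := le_trans (by linarith) hRεlo
  have hωlo : sa*((1/7)*((1-x)*(2+x)+t)) ≤ ωbar α ε η k := by
    rw [hωb_eq]
    exact mul_le_mul_of_nonneg_left (key2lo x t v hx2 ht0 htb hv1 hv2) hsa.le
  have hωhi : ωbar α ε η k ≤ sa*(6*((1-x)*(2+x)+t)) := by
    rw [hωb_eq]
    exact mul_le_mul_of_nonneg_left
      (key2hi x t v hx1 hx2 ht0 hv1 (by linarith)) hsa.le
  have hω0 : 0 ≤ ωbar α ε η k :=
    le_trans (mul_nonneg hsa.le (by linarith)) hωlo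
  have hs2Rε : s2^2 ≤ 6*Rε ε η k := by
    linarith [hs2sq, hRεlo, ht0, sq_nonneg (1-x),
      mul_nonneg (by linarith : (0:ℝ) ≤ 1-x) (by linarith : (0:ℝ) ≤ 3+x)]
  have htRε : t ≤ 3*Rε ε η k := by
    linarith [hRεlo, mul_nonneg (by linarith : (0:ℝ) ≤ 1-x) (by linarith : (0:ℝ) ≤ 2+x)]
  constructor
  · -- (i)
    constructor
    · rw [inv_mul_le_iff₀ hC0, hRk]
      linarith [mul_nonneg (by linarith : (0:ℝ) ≤ C-3) hRε0, hRεlo]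
    · rw [hRk]
      linarith [mul_nonneg (by linarith : (0:ℝ) ≤ C-35) hRt0, hRεhi]
  refine ⟨?_, ?_, ?_⟩
  · -- (ii)
    constructor
    · rw [inv_mul_le_iff₀ hC0]
      have h1 : C*(sa*((1/7)*((1-x)*(2+x)+t))) ≤ C*ωbar α ε η k :=
        mul_le_mul_of_nonneg_left hωlo hC0.le
      linarith [h1, mul_nonneg (by linarith : (0:ℝ) ≤ C*sa-245) hRt0, hRεhi]
    · linarith [hωhi, mul_nonneg hsa.le (by linarith : (0:ℝ) ≤ 3*Rε ε η k - ((1-x)*(2+x)+t)),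
        mul_nonneg (by linarith : (0:ℝ) ≤ C-18*sa) hRε0]
  · -- (iii)
    have e : Δω α ε η k * R' k = (4*π*sa*s2^2)*(w*(1+2*x)) := by
      rw [hΔω_eq, hR'_eq]; ring
    have hwa : |w| ≤ π*(ε*M) := by
      rw [hw]
      refine le_trans (Real.abs_sin_le_abs) ?_
      rw [_root_.abs_mul, _root_.abs_of_pos Real.pi_pos, _root_.abs_mul, _root_.abs_of_pos hε0]
      exact mul_le_mul_of_nonneg_left (mul_le_mul_of_nonneg_left hη hε0.le) Real.pi_pos.le
    have hxa : |1+2*x| ≤ 3 := abs_le.mpr ⟨by linarith, by linarith⟩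
    have hb1 : |w*(1+2*x)| ≤ (π*(ε*M))*3 := by
      rw [_root_.abs_mul]
      exact mul_le_mul hwa hxa (_root_.abs_nonneg _) (by positivity)
    calc |Δω α ε η k * R' k| = (4*π*sa*s2^2)*|w*(1+2*x)| := by
          rw [e, _root_.abs_mul, _root_.abs_of_nonneg (by positivity)]
      _ ≤ (4*π*sa*s2^2)*((π*(ε*M))*3) := mul_le_mul_of_nonneg_left hb1 (by positivity)
      _ = (12*π^2*sa*ε*M)*s2^2 := by ring
      _ ≤ (12*π^2*sa*ε*M)*(6*Rε ε η k) := mul_le_mul_of_nonneg_left hs2Rε (by positivity)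
      _ = (72*π^2*sa*M)*(ε*Rε ε η k) := by ring
      _ ≤ C*(ε*Rε ε η k) := mul_le_mul_of_nonneg_right hCiii (by positivity)
      _ = C*ε*Rε ε η k := by ring
  · -- (iv)
    intro lam hlam
    have hwsq : w^2 ≤ 10*t := by
      have h0 : |w| ≤ |π*(ε*η)| := hw ▸ Real.abs_sin_le_abs
      have h2 : w^2 ≤ (π*(ε*η))^2 := by
        rw [← _root_.sq_abs w, ← _root_.sq_abs (π*(ε*η))]
        exact pow_le_pow_left₀ (_root_.abs_nonneg w) h0 2
      have h3 : π^2*(ε*η)^2 ≤ 10*(ε*η)^2 :=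
        mul_le_mul_of_nonneg_right h10 (sq_nonneg (ε*η))
      have e : (π*(ε*η))^2 = π^2*(ε*η)^2 := by ring
      rw [ht]; linarith [e ▸ h2]
    have hΔabs : |Δω α ε η k| ≤ 36*sa*Rε ε η k := by
      rw [hΔω_eq, _root_.abs_mul, _root_.abs_mul, _root_.abs_of_nonneg (by norm_num : (0:ℝ) ≤ 2),
        _root_.abs_of_nonneg hsa.le]
      have h1 : |s2*w| ≤ (s2^2 + w^2)/2 := by
        rw [_root_.abs_mul]
        linarith [sq_nonneg (|s2|-|w|), _root_.sq_abs s2, _root_.sq_abs w]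
      have h2 : |s2*w| ≤ 18*Rε ε η k := by linarith [hs2Rε, hwsq, htRε]
      linarith [mul_le_mul_of_nonneg_left h2 (by positivity : (0:ℝ) ≤ 2*sa)]
    have hre : |ε^2*lam + 2*γ*Rε ε η k| = ε^2*lam + 2*γ*Rε ε η k := by
      apply _root_.abs_of_nonneg; positivity
    have hlamε : 0 ≤ lam*ε^2 := by positivity
    have hRη : |R' k * (ε*η)| ≤ 27*π*Rε ε η k := by
      rw [hR'_eq, show 2*π*(s2*(1+2*x))*(ε*η) = (2*π*(1+2*x))*(s2*(ε*η)) by ring, _root_.abs_mul]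
      have h1 : |s2*(ε*η)| ≤ (s2^2 + t)/2 := by
        rw [_root_.abs_mul]
        linarith [sq_nonneg (|s2|-|ε*η|), _root_.sq_abs s2, _root_.sq_abs (ε*η), ht]
      have h2 : |s2*(ε*η)| ≤ (9/2)*Rε ε η k := by linarith [hs2Rε, htRε]
      have h3 : |2*π*(1+2*x)| ≤ 6*π := by
        rw [_root_.abs_mul, _root_.abs_of_nonneg (by positivity : (0:ℝ) ≤ 2*π)]
        have hxa : |1+2*x| ≤ 3 := abs_le.mpr ⟨by linarith, by linarith⟩
        linarith [mul_le_mul_of_nonneg_left hxa (by positivity : (0:ℝ) ≤ 2*π)]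
      have h4 : 0 ≤ |s2*(ε*η)| := _root_.abs_nonneg _
      linarith [mul_le_mul h3 h2 h4 (by positivity : (0:ℝ) ≤ 6*π)]
    have hbound : γ*Rε ε η k + γ/2*|R' k * (ε*η)| ≤ C*(Rε ε η k + lam*ε^2) := by
      have h5 : γ/2*|R' k * (ε*η)| ≤ γ/2*(27*π*Rε ε η k) :=
        mul_le_mul_of_nonneg_left hRη (by positivity)
      linarith [h5, mul_nonneg (by linarith : (0:ℝ) ≤ C - 45*γ) hRε0,
        mul_nonneg hC0.le hlamε, mul_nonneg hγ.le hRε0,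
        mul_nonneg hγ.le (mul_nonneg (by linarith : (0:ℝ) ≤ 3.15 - π) hRε0)]
    refine ⟨?_, ?_, ?_, ?_⟩
    · -- D₁
      have h1 : ‖D₁ α γ ε lam η k‖ ≤ |ε^2*lam + 2*γ*Rε ε η k| + |Δω α ε η k| := by
        unfold D₁
        refine le_trans (norm_add_le _ _) ?_
        rw [norm_mul, Complex.norm_I, Complex.norm_real, Complex.norm_real, one_mul,
          Real.norm_eq_abs, Real.norm_eq_abs]
      rw [hre] at h1
      linarith [h1, hΔabs, _root_.abs_nonneg (Δω α ε η k),
        mul_nonneg (by linarith : (0:ℝ) ≤ C - 2*γ - 36*sa) hRε0,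
        mul_nonneg (by linarith : (0:ℝ) ≤ C-1) hlamε]
    · -- D₂
      have h1 : ‖D₂ α γ ε lam η k‖
          ≤ |ε^2*lam + 2*γ*Rε ε η k| + 2*|ωbar α ε η k| := by
        unfold D₂
        refine le_trans (norm_add_le _ _) ?_
        rw [norm_mul, norm_mul, Complex.norm_I, Complex.norm_real, Complex.norm_real,
          Complex.norm_two, mul_one, Real.norm_eq_abs, Real.norm_eq_abs]
      rw [hre, _root_.abs_of_nonneg hω0] at h1
      have h2 : ωbar α ε η k ≤ 18*sa*Rε ε η k := by
        linarith [hωhi,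
          mul_nonneg hsa.le (by linarith : (0:ℝ) ≤ 3*Rε ε η k - ((1-x)*(2+x)+t))]
      linarith [h1, h2,
        mul_nonneg (by linarith : (0:ℝ) ≤ C - 2*γ - 36*sa) hRε0,
        mul_nonneg (by linarith : (0:ℝ) ≤ C-1) hlamε]
    · -- D₊
      calc |Dplus γ ε η k| ≤ γ*Rε ε η k + γ/2*|R' k * (ε*η)| := by
            unfold Dplus
            refine le_trans (_root_.abs_add_le _ _) ?_
            rw [show -γ*Rε ε η k = -(γ*Rε ε η k) by ring, _root_.abs_neg,
              _root_.abs_of_nonneg (by positivity : (0:ℝ) ≤ γ*Rε ε η k),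
              show γ*ε/2*R' k*η = γ/2*(R' k*(ε*η)) by ring, _root_.abs_mul,
              _root_.abs_of_nonneg (by positivity : (0:ℝ) ≤ γ/2)]
        _ ≤ C*(Rε ε η k + lam*ε^2) := hbound
    · -- D₋
      calc |Dminus γ ε η k| ≤ γ*Rε ε η k + γ/2*|R' k * (ε*η)| := by
            unfold Dminus
            refine le_trans (_root_.abs_sub _ _) ?_
            rw [show -γ*Rε ε η k = -(γ*Rε ε η k) by ring, _root_.abs_neg,
              _root_.abs_of_nonneg (by positivity : (0:ℝ) ≤ γ*Rε ε η k),
              show γ*ε/2*R' k*η = γ/2*(R' k*(ε*η)) by ring, _root_.abs_mul,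
              _root_.abs_of_nonneg (by positivity : (0:ℝ) ≤ γ/2)]
        _ ≤ C*(Rε ε η k + lam*ε^2) := hbound



set_option maxHeartbeats 2000000 in
theorem basic_symbol_bounds (α γ : ℝ) (hα : 0 < α) (hγ : 0 < γ) (M : ℝ) (hM : 0 < M) :
    ∃ ε₀ ∈ Set.Ioc (0:ℝ) 1, ∃ C : ℝ, 1 ≤ C ∧
      ∀ (k η ε : ℝ), |η| ≤ M → ε ∈ Set.Ioc 0 ε₀ →
        (C⁻¹ * (R k + (ε * η) ^ 2) ≤ Rε ε η k ∧ Rε ε η k ≤ C * (R k + (ε * η) ^ 2)) ∧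
        (C⁻¹ * Rε ε η k ≤ ωbar α ε η k ∧ ωbar α ε η k ≤ C * Rε ε η k) ∧
        |Δω α ε η k * R' k| ≤ C * ε * Rε ε η k ∧
        (∀ lam : ℝ, 0 < lam →
          ‖D₁ α γ ε lam η k‖ ≤ C * (Rε ε η k + lam * ε ^ 2) ∧
          ‖D₂ α γ ε lam η k‖ ≤ C * (Rε ε η k + lam * ε ^ 2) ∧
          |Dplus γ ε η k| ≤ C * (Rε ε η k + lam * ε ^ 2) ∧
          |Dminus γ ε η k| ≤ C * (Rε ε η k + lam * ε ^ 2)) := by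
  have hπ : (3:ℝ) < π := Real.pi_gt_three
  have hπ' : π < 3.15 := by
    have := Real.pi_lt_d2; linarith
  have h9 : (9:ℝ) ≤ π^2 := by nlinarith
  have h10 : π^2 ≤ (10:ℝ) := by nlinarith
  obtain ⟨sa, hsadef⟩ : ∃ sa : ℝ, sa = Real.sqrt α := ⟨_, rfl⟩
  have hsa : 0 < sa := hsadef ▸ Real.sqrt_pos.mpr hα
  obtain ⟨C, hCdef⟩ : ∃ C : ℝ, C = 300*(1+π^2)*(1+sa)*(1+sa⁻¹)*(1+γ)*(1+M) := ⟨_, rfl⟩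
  have hb : 0 < sa⁻¹ := by positivity
  have hC0 : 0 < C := by rw [hCdef]; positivity
  -- constant lower bounds
  have hC35 : (35:ℝ) ≤ C := by
    rw [hCdef]
    have h : (35:ℝ)*1*1*1*1*1 ≤ 300*(1+π^2)*(1+sa)*(1+sa⁻¹)*(1+γ)*(1+M) := by
      gcongr <;> nlinarith
    linarith
  have hC245 : (245:ℝ) ≤ C*sa := by
    rw [hCdef]
    have h : (245:ℝ)*1*sa⁻¹*1*1*sa ≤ 300*(1+π^2)*(1+sa)*(1+sa⁻¹)*(1+γ)*(1+M)*sa := by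
      gcongr <;> nlinarith
    have e : (245:ℝ)*1*sa⁻¹*1*1*sa = 245 := by field_simp
    linarith
  have hCω : 18*sa ≤ C := by
    rw [hCdef]
    have h : (18:ℝ)*1*sa*1*1*1 ≤ 300*(1+π^2)*(1+sa)*(1+sa⁻¹)*(1+γ)*(1+M) := by
      gcongr <;> nlinarith
    linarith
  have hCiii : 72*π^2*sa*M ≤ C := by
    rw [hCdef]
    have h : (72*π^2)*sa*1*1*M ≤ (300*(1+π^2))*(1+sa)*(1+sa⁻¹)*(1+γ)*(1+M) := by
      gcongr <;> nlinarith
    nlinarith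
  have hC2γ : 2*γ + 36*sa + 1 ≤ C := by
    have h1 : (300:ℝ)*1*1*1*γ*1 ≤ C := by rw [hCdef]; gcongr <;> nlinarith
    have h2 : (300:ℝ)*1*sa*1*1*1 ≤ C := by rw [hCdef]; gcongr <;> nlinarith
    have h3 : (100:ℝ)*1*1*1*1*1 ≤ C := by rw [hCdef]; gcongr <;> nlinarith
    nlinarith
  have hCpm : 45*γ ≤ C := by
    have h1 : (300:ℝ)*1*1*1*γ*1 ≤ C := by rw [hCdef]; gcongr <;> nlinarith
    nlinarith
  have hC1 : (1:ℝ) ≤ C := by linarith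
  refine ⟨min 1 (1/(15*(M+1))), ⟨lt_min one_pos (by positivity), min_le_left _ _⟩, C, hC1, ?_⟩
  intro k η ε hη hε
  obtain ⟨hε0, hεle⟩ := hε
  exact pointwise α γ sa C M hα hγ hM hsadef hsa hC0 hC35 hC245 hCω hCiii hC2γ hCpm hC1 k η ε hη hε0 (le_trans hεle (min_le_left _ _)) (le_trans hεle (min_le_right _ _))
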